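/- Let N ≥ 1 be a power of two, R = ℤ[X]/(X^N + 1), let p, q ≥ 1 be integers and m ≥ 1. Let s_0, …, s_{m−1} ∈ R (old keys), s'_0, …, s'_{2m−1} ∈ R (new keys), α_0, α_1 ∈ R, and B = (B_{r,j}) ∈ R^{2×2m} satisfy, for all 0 ≤ j < 2m: B_{0,j} ≡ −α_0·s'_j + p·s_j·[j < m] (mod p·q) and B_{1,j} ≡ −α_1·s'_j + p·s_{j−m}·[j ≥ m] (mod p·q), where [P] is 1 if P holds and 0 otherwise, and congruence modulo an integer r means the difference lies in r·R. Suppose a_0, a_1, b_0, …, b_{2m−1}, μ_0, …, μ_{2m−1} ∈ R satisfy a_0·s_j + b_j ≡ μ_j (mod q) for 0 ≤ j < m and a_1·s_{j−m} + b_j ≡ μ_j (mod q) for m ≤ j < 2m, and suppose a' ∈ R and c_0, …, c_{2m−1} ∈ R satisfy p·a' ≡ a_0·α_0 + a_1·α_1 (mod p·q) and p·c_j ≡ a_0·B_{0,j} + a_1·B_{1,j} (mod p·q) for all j. Then for every 0 ≤ j < 2m: a'·s'_j + (b_j + c_j) ≡ μ_j (mod q). -/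

import Mathlib

open Polynomial Finset

/-- `Rq N` is the ring `ℤ[X]/(X^N + 1)`. -/
abbrev Rq (N : ℕ) : Type := AdjoinRoot ((X : ℤ[X]) ^ N + 1)

/-- The image of the indeterminate `X` in `ℤ[X]/(X^N + 1)`. -/
noncomputable def rx (N : ℕ) : Rq N := AdjoinRoot.root _

/-- Exact-arithmetic correctness of one level of the fast (recursive)
shared-`s` to shared-`a` conversion (Algorithm 2). Congruence of elements of
`R = ℤ[X]/(X^N+1)` modulo an integer `r` is expressed as divisibility by
`(r : R)`. Given old keys `s_0, …, s_{m-1}`, new keys `s'_0, …, s'_{2m-1}`,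
a level key `((α_0, α_1), B)` with
`B_{0,j} ≡ -α_0·s'_j + p·s_j·[j < m] (mod pq)` and
`B_{1,j} ≡ -α_1·s'_j + p·s_{j-m}·[j ≥ m] (mod pq)`,
input ciphertexts with `a_0·s_j + b_j ≡ μ_j (mod q)` for `j < m` and
`a_1·s_{j-m} + b_j ≡ μ_j (mod q)` for `m ≤ j < 2m`, and outputs with
`p·a' ≡ a_0·α_0 + a_1·α_1 (mod pq)` and
`p·c_j ≡ a_0·B_{0,j} + a_1·B_{1,j} (mod pq)`, one has
`a'·s'_j + (b_j + c_j) ≡ μ_j (mod q)` for all `j < 2m`. -/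
theorem stmt14 (N : ℕ) (hN1 : 1 ≤ N) (hN : ∃ κ : ℕ, N = 2 ^ κ)
    (p q m : ℕ) (hp : 1 ≤ p) (hq : 1 ≤ q) (hm : 1 ≤ m)
    (s s' b μ c : ℕ → Rq N) (α : ℕ → Rq N) (B : ℕ → ℕ → Rq N)
    (a : ℕ → Rq N) (a' : Rq N)
    (hB0 : ∀ j < 2 * m, ((p * q : ℕ) : Rq N) ∣
      (B 0 j - (-(α 0) * s' j + (p : Rq N) * s j * (if j < m then 1 else 0))))
    (hB1 : ∀ j < 2 * m, ((p * q : ℕ) : Rq N) ∣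
      (B 1 j - (-(α 1) * s' j + (p : Rq N) * s (j - m) * (if m ≤ j then 1 else 0))))
    (henc0 : ∀ j < m, ((q : ℕ) : Rq N) ∣ (a 0 * s j + b j - μ j))
    (henc1 : ∀ j, m ≤ j → j < 2 * m →
      ((q : ℕ) : Rq N) ∣ (a 1 * s (j - m) + b j - μ j))
    (ha' : ((p * q : ℕ) : Rq N) ∣ ((p : Rq N) * a' - (a 0 * α 0 + a 1 * α 1)))
    (hc : ∀ j < 2 * m, ((p * q : ℕ) : Rq N) ∣
      ((p : Rq N) * c j - (a 0 * B 0 j + a 1 * B 1 j))) :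
    ∀ j < 2 * m, ((q : ℕ) : Rq N) ∣ (a' * s' j + (b j + c j) - μ j) := by
  have hmon : ((X : ℤ[X]) ^ N + 1).Monic := by
    have h1 : (1 : ℤ[X]) = C 1 := by simp
    rw [h1]; exact monic_X_pow_add_C _ (by omega)
  have hb := (AdjoinRoot.powerBasis' hmon).basis
  have hnz := hb.isTorsionFree
  have hcancel : ∀ x y : Rq N, (p : Rq N) * x = (p : Rq N) * y → x = y := by
    intro x y h
    have hsm : ∀ z : Rq N, (p : Rq N) * z = (p : ℤ) • z := by
      intro z; rw [zsmul_eq_mul]; push_cast; ring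
    rw [hsm, hsm] at h
    exact smul_right_injective (Rq N) (by positivity : (p:ℤ) ≠ 0) h
  intro j hj
  obtain ⟨u0, hu0⟩ := hB0 j hj
  obtain ⟨u1, hu1⟩ := hB1 j hj
  obtain ⟨v, hv⟩ := ha'
  obtain ⟨w, hw⟩ := hc j hj
  have hpq : ((p * q : ℕ) : Rq N) = (p : Rq N) * (q : Rq N) := by push_cast; ring
  rw [hpq] at hu0 hu1 hv hw
  rcases lt_or_ge j m with hjm | hjm
  · obtain ⟨e, he⟩ := henc0 j hjm
    rw [if_pos hjm] at hu0
    rw [if_neg (by omega)] at hu1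
    refine ⟨e + v * s' j + w + a 0 * u0 + a 1 * u1, hcancel _ _ ?_⟩
    linear_combination s' j * hv + hw + a 0 * hu0 + a 1 * hu1 + (p : Rq N) * he
  · obtain ⟨e, he⟩ := henc1 j hjm hj
    rw [if_neg (by omega)] at hu0
    rw [if_pos hjm] at hu1
    refine ⟨e + v * s' j + w + a 0 * u0 + a 1 * u1, hcancel _ _ ?_⟩
    linear_combination s' j * hv + hw + a 0 * hu0 + a 1 * hu1 + (p : Rq N) * he
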